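/- Let P = {p_1,...,p_N} ⊂ E^d with |p_i − p_j| ≥ λ > 0 for all i < j, where d ≥ d_0 (a large universal constant) and N ≥ 2.359^d. Then the Euclidean circumradius of P satisfies cr(P) > 0.7865·λ > sqrt(2d/(d+1))·(λ/2). -/

import Mathlib

open MeasureTheory Set

/-- Energy argument: pointwise bound on the Blichfeldt bump sum. -/
lemma key_pointwise {d N : ℕ} {lam : ℝ} (hlam : 0 < lam)
    (p : Fin N → EuclideanSpace ℝ (Fin d))
    (hp : ∀ i j, i ≠ j → lam ≤ dist (p i) (p j)) (y : EuclideanSpace ℝ (Fin d)) :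
    ∑ i, max 0 (lam^2/2 - dist y (p i)^2) ≤ lam^2/2 := by
  classical
  set K := Finset.univ.filter (fun i => dist y (p i)^2 < lam^2/2) with hKdef
  have hsum : ∑ i, max 0 (lam^2/2 - dist y (p i)^2)
      = ∑ i ∈ K, (lam^2/2 - dist y (p i)^2) := by
    rw [← Finset.sum_filter_add_sum_filter_not Finset.univ
      (fun i => dist y (p i)^2 < lam^2/2) (fun i => max 0 (lam^2/2 - dist y (p i)^2))]
    have h1 : ∑ i ∈ K, max 0 (lam^2/2 - dist y (p i)^2)
        = ∑ i ∈ K, (lam^2/2 - dist y (p i)^2) := by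
      apply Finset.sum_congr rfl
      intro i hi
      rw [hKdef, Finset.mem_filter] at hi
      rw [max_eq_right (by linarith [hi.2])]
    have h2 : ∑ i ∈ Finset.univ.filter (fun i => ¬ (dist y (p i)^2 < lam^2/2)),
        max 0 (lam^2/2 - dist y (p i)^2) = 0 := by
      apply Finset.sum_eq_zero
      intro i hi
      rw [Finset.mem_filter] at hi
      rw [max_eq_left (by push_neg at hi; linarith [hi.2])]
    rw [h1, h2, add_zero]
  rw [hsum]
  rcases Finset.eq_empty_or_nonempty K with hK | hK
  · rw [hK, Finset.sum_empty]; positivity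
  -- energy argument
  set a : Fin N → EuclideanSpace ℝ (Fin d) := fun i => p i - y with ha
  have hdist : ∀ i, dist y (p i) = ‖a i‖ := by
    intro i; rw [ha, dist_eq_norm, ← norm_neg]; simp
  have hinner : ∑ i ∈ K, ∑ j ∈ K, (inner ℝ (a i) (a j) : ℝ) = ‖∑ i ∈ K, a i‖^2 := by
    rw [← real_inner_self_eq_norm_sq, sum_inner]
    exact Finset.sum_congr rfl fun i _ => (inner_sum K a (a i)).symm
  have step : ∀ i ∈ K, ∑ j ∈ K, ‖a i - a j‖^2
      = (K.card:ℝ)*‖a i‖^2 + (∑ j ∈ K, ‖a j‖^2) - 2*∑ j ∈ K, (inner ℝ (a i) (a j) : ℝ) := by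
    intro i _
    have h : ∀ j ∈ K, ‖a i - a j‖^2
        = ‖a i‖^2 - 2*(inner ℝ (a i) (a j) : ℝ) + ‖a j‖^2 := fun j _ => norm_sub_sq_real _ _
    rw [Finset.sum_congr rfl h, Finset.sum_add_distrib, Finset.sum_sub_distrib,
      Finset.sum_const, nsmul_eq_mul]
    simp only [Finset.mul_sum]
    ring
  have expand : ∑ i ∈ K, ∑ j ∈ K, ‖a i - a j‖^2
      = 2*(K.card:ℝ) * ∑ i ∈ K, ‖a i‖^2 - 2*‖∑ i ∈ K, a i‖^2 := by
    calc ∑ i ∈ K, ∑ j ∈ K, ‖a i - a j‖^2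
        = ∑ i ∈ K, ((K.card:ℝ)*‖a i‖^2 + (∑ j ∈ K, ‖a j‖^2)
            - 2*∑ j ∈ K, (inner ℝ (a i) (a j) : ℝ)) := Finset.sum_congr rfl step
      _ = (K.card:ℝ)*(∑ i ∈ K, ‖a i‖^2) + (K.card:ℝ)*(∑ j ∈ K, ‖a j‖^2)
            - 2*∑ i ∈ K, ∑ j ∈ K, (inner ℝ (a i) (a j) : ℝ) := by
          rw [Finset.sum_sub_distrib, Finset.sum_add_distrib, Finset.sum_const, nsmul_eq_mul]
          simp only [Finset.mul_sum]
      _ = 2*(K.card:ℝ) * ∑ i ∈ K, ‖a i‖^2 - 2*‖∑ i ∈ K, a i‖^2 := by rw [hinner]; ring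
  have lower : (K.card:ℝ) * ((K.card:ℝ) - 1) * lam^2 ≤ ∑ i ∈ K, ∑ j ∈ K, ‖a i - a j‖^2 := by
    have hterm : ∀ i ∈ K, ∀ j ∈ K, (lam^2 - (if i = j then lam^2 else 0)) ≤ ‖a i - a j‖^2 := by
      intro i _ j _
      by_cases h : i = j
      · simp [h]
      · simp only [h, if_false, sub_zero]
        have hij : a i - a j = p i - p j := by rw [ha]; exact sub_sub_sub_cancel_right _ _ _
        rw [hij, ← dist_eq_norm]
        have := hp i j h
        nlinarith [dist_nonneg (x := p i) (y := p j)]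
    have inner_eq : ∀ i ∈ K, ∑ j ∈ K, (lam^2 - (if i = j then lam^2 else 0))
        = (K.card:ℝ)*lam^2 - lam^2 := by
      intro i hi
      rw [Finset.sum_sub_distrib, Finset.sum_const, nsmul_eq_mul,
        Finset.sum_ite_eq K i (fun _ => lam^2), if_pos hi]
    calc (K.card:ℝ) * ((K.card:ℝ) - 1) * lam^2
        = ∑ i ∈ K, ((K.card:ℝ)*lam^2 - lam^2) := by
          rw [Finset.sum_const, nsmul_eq_mul]; ring
      _ = ∑ i ∈ K, ∑ j ∈ K, (lam^2 - (if i = j then lam^2 else 0)) :=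
          (Finset.sum_congr rfl inner_eq).symm
      _ ≤ ∑ i ∈ K, ∑ j ∈ K, ‖a i - a j‖^2 :=
          Finset.sum_le_sum fun i hi => Finset.sum_le_sum (hterm i hi)
  have hnormsum : (0:ℝ) ≤ ‖∑ i ∈ K, a i‖^2 := by positivity
  have hcard : (1:ℝ) ≤ (K.card:ℝ) := by
    exact_mod_cast Nat.one_le_iff_ne_zero.mpr (Finset.card_ne_zero_of_mem hK.choose_spec)
  have hE : ((K.card:ℝ) - 1) * lam^2 / 2 ≤ ∑ i ∈ K, ‖a i‖^2 := by
    nlinarith [expand, lower]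
  have hfin : ∑ i ∈ K, (lam^2/2 - dist y (p i)^2)
      = (K.card:ℝ) * (lam^2/2) - ∑ i ∈ K, ‖a i‖^2 := by
    rw [Finset.sum_sub_distrib, Finset.sum_const, nsmul_eq_mul]
    congr 1
    exact Finset.sum_congr rfl fun i _ => by rw [hdist]
  rw [hfin]
  linarith

/-- Blichfeldt-type packing estimate. -/
lemma packing_bound {d N : ℕ} {lam ρ : ℝ} (hlam : 0 < lam) (hρ : 0 ≤ ρ)
    (p : Fin N → EuclideanSpace ℝ (Fin d))
    (hp : ∀ i j, i ≠ j → lam ≤ dist (p i) (p j))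
    (x : EuclideanSpace ℝ (Fin d)) (hx : ∀ i, p i ∈ Metric.closedBall x ρ) :
    (N:ℝ) * (0.002975 * lam^2) * (0.705*lam)^d ≤ (lam^2/2) * (ρ + 0.7072*lam)^d := by
  classical
  set F : Fin N → EuclideanSpace ℝ (Fin d) → ENNReal :=
    fun i y => ENNReal.ofReal (max 0 (lam^2/2 - dist y (p i)^2)) with hF
  have measF : ∀ i, Measurable (F i) := by
    intro i
    apply Measurable.ennreal_ofReal
    apply Measurable.max measurable_const
    exact (measurable_const.sub ((measurable_dist.comp
      (measurable_id.prodMk measurable_const)).pow measurable_const))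
  set R := ρ + 0.7072*lam with hR
  set r := 0.705*lam with hr
  have hRpos : 0 ≤ R := by positivity
  have hrpos : 0 ≤ r := by positivity
  -- upper bound
  have hU : ∀ y, ∑ i, F i y ≤
      (Metric.closedBall x R).indicator (fun _ => ENNReal.ofReal (lam^2/2)) y := by
    intro y
    by_cases hy : y ∈ Metric.closedBall x R
    · rw [Set.indicator_of_mem hy]
      rw [hF]
      rw [← ENNReal.ofReal_sum_of_nonneg (fun i _ => le_max_left _ _)]
      exact ENNReal.ofReal_le_ofReal (key_pointwise hlam p hp y)
    · rw [Set.indicator_of_notMem hy]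
      have hzero : ∀ i, F i y = 0 := by
        intro i
        have h1 : R < dist y x := by
          rw [Metric.mem_closedBall] at hy; linarith [not_le.mp hy]
        have h2 : dist y x ≤ dist y (p i) + dist (p i) x := dist_triangle _ _ _
        have h3 : dist (p i) x ≤ ρ := hx i
        have h4 : 0.7072 * lam < dist y (p i) := by rw [hR] at h1; linarith
        have h5 : lam^2/2 - dist y (p i)^2 < 0 := by nlinarith
        rw [hF]
        simp only [max_eq_left h5.le, ENNReal.ofReal_zero]
      simp [hzero]
  have hUint : ∑ i, ∫⁻ y, F i y ≤ ENNReal.ofReal (lam^2/2) * volume (Metric.closedBall x R) := by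
    rw [← lintegral_finset_sum Finset.univ (fun i _ => measF i)]
    calc ∫⁻ y, ∑ i, F i y
        ≤ ∫⁻ y, (Metric.closedBall x R).indicator (fun _ => ENNReal.ofReal (lam^2/2)) y :=
          lintegral_mono hU
      _ = ENNReal.ofReal (lam^2/2) * volume (Metric.closedBall x R) :=
          lintegral_indicator_const Metric.isClosed_closedBall.measurableSet _
  -- lower bound
  have hLint : ∀ i, ENNReal.ofReal (0.002975 * lam^2) * volume (Metric.closedBall (p i) r)
      ≤ ∫⁻ y, F i y := by
    intro i
    rw [← lintegral_indicator_const Metric.isClosed_closedBall.measurableSet]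
    apply lintegral_mono
    intro y
    by_cases hy : y ∈ Metric.closedBall (p i) r
    · rw [Set.indicator_of_mem hy]
      apply ENNReal.ofReal_le_ofReal
      rw [Metric.mem_closedBall, hr] at hy
      have hd : 0 ≤ dist y (p i) := dist_nonneg
      have h6 : 0.002975 * lam^2 ≤ lam^2/2 - dist y (p i)^2 := by nlinarith
      exact le_trans h6 (le_max_right _ _)
    · rw [Set.indicator_of_notMem hy]
      exact zero_le
  -- volumes
  set V := volume (Metric.ball (0 : EuclideanSpace ℝ (Fin d)) 1) with hV
  have hfrk : Module.finrank ℝ (EuclideanSpace ℝ (Fin d)) = d := finrank_euclideanSpace_fin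
  have volR : volume (Metric.closedBall x R) = ENNReal.ofReal (R^d) * V := by
    rw [Measure.addHaar_closedBall volume x hRpos, hfrk]
  have volr : ∀ z : EuclideanSpace ℝ (Fin d),
      volume (Metric.closedBall z r) = ENNReal.ofReal (r^d) * V := by
    intro z
    rw [Measure.addHaar_closedBall volume z hrpos, hfrk]
  have chain : ((N:ENNReal) * ENNReal.ofReal (0.002975 * lam^2) * ENNReal.ofReal (r^d)) * V
      ≤ (ENNReal.ofReal (lam^2/2) * ENNReal.ofReal (R^d)) * V := by
    calc ((N:ENNReal) * ENNReal.ofReal (0.002975 * lam^2) * ENNReal.ofReal (r^d)) * V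
        = ∑ _i : Fin N, ENNReal.ofReal (0.002975 * lam^2) * (ENNReal.ofReal (r^d) * V) := by
          rw [Finset.sum_const, Finset.card_univ, Fintype.card_fin, nsmul_eq_mul]
          ring
      _ ≤ ∑ i, ∫⁻ y, F i y := by
          apply Finset.sum_le_sum
          intro i _
          rw [← volr (p i)]
          exact hLint i
      _ ≤ ENNReal.ofReal (lam^2/2) * volume (Metric.closedBall x R) := hUint
      _ = (ENNReal.ofReal (lam^2/2) * ENNReal.ofReal (R^d)) * V := by rw [volR]; ring
  have hV0 : V ≠ 0 := (Metric.measure_ball_pos volume _ one_pos).ne'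
  have hVtop : V ≠ ⊤ := measure_ball_lt_top.ne
  rw [ENNReal.mul_le_mul_iff_left hV0 hVtop] at chain
  have h1 : ENNReal.ofReal ((N:ℝ) * (0.002975 * lam^2) * (r^d))
      = (N:ENNReal) * ENNReal.ofReal (0.002975 * lam^2) * ENNReal.ofReal (r^d) := by
    rw [ENNReal.ofReal_mul (by positivity), ENNReal.ofReal_mul (by positivity),
      ENNReal.ofReal_natCast]
  have h2 : ENNReal.ofReal ((lam^2/2) * (R^d))
      = ENNReal.ofReal (lam^2/2) * ENNReal.ofReal (R^d) :=
    ENNReal.ofReal_mul (by positivity)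
  have key : (N:ℝ) * (0.002975 * lam^2) * (r^d) ≤ (lam^2/2) * (R^d) := by
    rw [← ENNReal.ofReal_le_ofReal_iff (by positivity), h1, h2]
    exact chain
  calc (N:ℝ) * (0.002975 * lam^2) * (0.705*lam)^d
      = (N:ℝ) * (0.002975 * lam^2) * (r^d) := by rw [hr]
    _ ≤ (lam^2/2) * (R^d) := key
    _ = (lam^2/2) * (ρ + 0.7072*lam)^d := by rw [hR]

theorem circumradius_lower_bound_euclidean :
    ∃ d₀ : ℕ, ∀ d : ℕ, d₀ ≤ d → ∀ N : ℕ, (2.359 : ℝ) ^ d ≤ (N : ℝ) →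
    ∀ lam : ℝ, 0 < lam →
    ∀ p : Fin N → EuclideanSpace ℝ (Fin d),
    (∀ i j, i ≠ j → lam ≤ dist (p i) (p j)) →
    Real.sqrt (2 * (d : ℝ) / ((d : ℝ) + 1)) * (lam / 2) < 0.7865 * lam ∧
    0.7865 * lam <
      sInf {ρ : ℝ | ∃ x : EuclideanSpace ℝ (Fin d), ∀ i, p i ∈ Metric.closedBall x ρ} := by
  use 2000
  intro d hd N hN lam hlam p hp
  have hd1 : (1:ℝ) ≤ (d:ℝ) := by
    have : (1:ℕ) ≤ d := by omega
    exact_mod_cast this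
  have hNpos : 1 ≤ N := by
    by_contra h
    push_neg at h
    interval_cases N
    simp only [Nat.cast_zero] at hN
    have : (1:ℝ) ≤ (2.359:ℝ)^d := one_le_pow₀ (by norm_num)
    linarith
  haveI : NeZero N := ⟨by omega⟩
  constructor
  · -- first inequality
    have h1 : Real.sqrt (2 * (d:ℝ) / ((d:ℝ) + 1)) < 1.573 := by
      rw [show (1.573:ℝ) = Real.sqrt (1.573^2) from (Real.sqrt_sq (by norm_num)).symm]
      apply Real.sqrt_lt_sqrt (by positivity)
      rw [div_lt_iff₀ (by linarith)]
      nlinarith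
    nlinarith [Real.sqrt_nonneg (2 * (d:ℝ) / ((d:ℝ) + 1))]
  · -- second inequality
    set S := {ρ : ℝ | ∃ x : EuclideanSpace ℝ (Fin d), ∀ i, p i ∈ Metric.closedBall x ρ} with hS
    haveI : Nonempty (Fin N) := ⟨⟨0, hNpos⟩⟩
    have hSne : S.Nonempty := by
      obtain ⟨C, hC⟩ : ∃ C : ℝ, ∀ i, dist (p i) (p ⟨0, hNpos⟩) ≤ C :=
        ⟨Finset.univ.sup' (Finset.univ_nonempty (α := Fin N))
            (fun i => dist (p i) (p ⟨0, hNpos⟩)),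
          fun i => Finset.le_sup' (fun j => dist (p j) (p ⟨0, hNpos⟩)) (Finset.mem_univ i)⟩
      exact ⟨C, p ⟨0, hNpos⟩, fun i => Metric.mem_closedBall.mpr (hC i)⟩
    have hlb : ∀ ρ ∈ S, 0.79 * lam ≤ ρ := by
      rintro ρ ⟨x, hx⟩
      have hρ0 : 0 ≤ ρ := le_trans dist_nonneg (hx ⟨0, hNpos⟩)
      by_contra h
      push_neg at h
      have key := packing_bound hlam hρ0 p hp x hx
      -- now numeric contradiction
      have e1 : (0.705*lam)^d = 0.705^d * lam^d := by rw [mul_pow]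
      have e2 : (ρ + 0.7072*lam)^d ≤ (1.4972*lam)^d := by
        apply pow_le_pow_left₀ (by positivity)
        linarith
      have e3 : (1.4972*lam)^d = 1.4972^d * lam^d := by rw [mul_pow]
      have hlamd : (0:ℝ) < lam^d := by positivity
      have key2 : (2.359:ℝ)^d * (0.002975 * lam^2) * (0.705^d * lam^d)
          ≤ (lam^2/2) * (1.4972^d * lam^d) := by
        calc (2.359:ℝ)^d * (0.002975 * lam^2) * (0.705^d * lam^d)
            ≤ (N:ℝ) * (0.002975 * lam^2) * (0.705^d * lam^d) := by
              apply mul_le_mul_of_nonneg_right _ (by positivity)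
              apply mul_le_mul_of_nonneg_right hN (by positivity)
          _ = (N:ℝ) * (0.002975 * lam^2) * (0.705*lam)^d := by rw [e1]
          _ ≤ (lam^2/2) * (ρ + 0.7072*lam)^d := key
          _ ≤ (lam^2/2) * (1.4972*lam)^d := by
              apply mul_le_mul_of_nonneg_left e2 (by positivity)
          _ = (lam^2/2) * (1.4972^d * lam^d) := by rw [e3]
      have key3 : (2.359:ℝ)^d * 0.002975 * 0.705^d ≤ 1.4972^d / 2 := by
        have hl2 : (0:ℝ) < lam^2 * lam^d := by positivity
        nlinarith [key2, hl2]
      -- Bernoulli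
      have bern : (222:ℝ) * 1.4972^d ≤ 2.359^d * 0.705^d := by
        have hb : (1:ℝ) + d * 0.1105 ≤ (1.1105:ℝ)^d := by
          have hq := one_add_mul_le_pow (a := (0.1105:ℝ)) (by norm_num) d
          calc (1:ℝ) + d * 0.1105 ≤ ((1:ℝ) + 0.1105)^d := hq
            _ = (1.1105:ℝ)^d := by norm_num
        have hd2000 : (2000:ℝ) ≤ (d:ℝ) := by exact_mod_cast hd
        have h222 : (222:ℝ) ≤ (1.1105:ℝ)^d := by nlinarith
        calc (222:ℝ) * 1.4972^d ≤ (1.1105:ℝ)^d * 1.4972^d := by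
              apply mul_le_mul_of_nonneg_right h222 (by positivity)
          _ = (1.1105 * 1.4972:ℝ)^d := by rw [← mul_pow]
          _ ≤ (2.359 * 0.705:ℝ)^d := by
              apply pow_le_pow_left₀ (by norm_num) (by norm_num)
          _ = 2.359^d * 0.705^d := by rw [mul_pow]
      have hpos : (0:ℝ) < 1.4972^d := by positivity
      nlinarith [key3, bern, hpos]
    have hInf : 0.79 * lam ≤ sInf S := le_csInf hSne hlb
    linarith
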